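/- Fix a positive integer k and let E_k denote expectation with respect to the uniform measure on k-tuples of spin configurations σ^(1),…,σ^(k) ∈ {−1,+1}^n. Define the pairwise overlaps q_{ij} = (1/n) Σ_{s=1}^n σ_s^(i) σ_s^(j) and q_max = max_{i≠j} |q_{ij}|. Then for any β ≥ 0 with k(k−1)β < n and any function g on k-tuples of configurations satisfying |g(σ^(1),…,σ^(k))| ≤ β q_max², one has (1 − k(k−1)β/(2n)) ≤ E_k[exp(g)] ≤ (1 − k(k−1)β/n)^{−1/2}. -/

import Mathlib

open Finset

/-- The map sending a Boolean to the spin value `±1`. -/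
noncomputable def spin (b : Bool) : ℝ := if b then 1 else -1

/-- The overlap `q(σ,σ') = (1/n) ∑_s σ_s σ'_s` of two spin configurations. -/
noncomputable def overlap {n : ℕ} (σ τ : Fin n → Bool) : ℝ :=
  (n : ℝ)⁻¹ * ∑ s, spin (σ s) * spin (τ s)

/-- The maximal off-diagonal overlap `q_max = max_{i≠j} |q_{ij}|` of a `k`-tuple of
spin configurations (equal to `0` when `k = 1`). -/
noncomputable def qmax {k n : ℕ} (σ : Fin k → Fin n → Bool) : ℝ :=
  ((Finset.univ : Finset (Fin k)).offDiag.sup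
    fun p => Real.toNNReal |overlap (σ p.1) (σ p.2)| : NNReal)

section Aux
open MeasureTheory

lemma spin_mul (a b : Bool) : spin a * spin b = spin (a == b) := by
  cases a <;> cases b <;> norm_num [spin]

lemma spin_not (a : Bool) : spin (!a) = - spin a := by
  cases a <;> norm_num [spin]

lemma sum_prod_bool {m : ℕ} (h : Fin m → Bool → ℝ) :
    ∑ ε : Fin m → Bool, ∏ i, h i (ε i) = ∏ i, (h i true + h i false) := by
  have := Finset.prod_univ_sum (fun _ : Fin m => (Finset.univ : Finset Bool)) h
  rw [Fintype.piFinset_univ] at this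
  rw [← this]
  congr 1; funext i
  simp [Fintype.sum_bool]

lemma sum_spin_pair {m : ℕ} {s t : Fin m} (hst : s ≠ t) :
    ∑ ε : Fin m → Bool, spin (ε s) * spin (ε t) = 0 := by
  have hinv : Function.Involutive (fun ε : Fin m → Bool => Function.update ε s (!(ε s))) := by
    intro ε
    funext x
    by_cases hx : x = s
    · subst hx; simp
    · simp [Function.update_of_ne hx]
  have e := Function.Involutive.toPerm _ hinv
  have key := Equiv.sum_comp (Function.Involutive.toPerm _ hinv)
      (fun ε : Fin m → Bool => spin (ε s) * spin (ε t))
  have hpt : ∀ ε : Fin m → Bool,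
      spin (((Function.Involutive.toPerm _ hinv) ε) s) * spin (((Function.Involutive.toPerm _ hinv) ε) t)
        = -(spin (ε s) * spin (ε t)) := by
    intro ε
    have h1 : ((Function.Involutive.toPerm _ hinv) ε) s = !(ε s) := by
      simp [Function.Involutive.toPerm, Equiv.coe_fn_mk]
    have h2 : ((Function.Involutive.toPerm _ hinv) ε) t = ε t := by
      show Function.update ε s (!(ε s)) t = ε t
      rw [Function.update_of_ne (Ne.symm hst)]
    rw [h1, h2, spin_not]; ring
  simp only [hpt] at key
  rw [Finset.sum_neg_distrib] at key
  linarith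

lemma sum_sq_spin {m : ℕ} :
    ∑ ε : Fin m → Bool, (∑ s, spin (ε s)) ^ 2 = (m : ℝ) * 2 ^ m := by
  have expand : ∀ ε : Fin m → Bool,
      (∑ s, spin (ε s)) ^ 2 = ∑ s, ∑ t, spin (ε s) * spin (ε t) := by
    intro ε; rw [sq, Finset.sum_mul_sum]
  simp only [expand]
  rw [Finset.sum_comm]
  have : ∀ s : Fin m, ∑ ε : Fin m → Bool, ∑ t, spin (ε s) * spin (ε t) = 2 ^ m := by
    intro s
    rw [Finset.sum_comm]
    have : ∀ t : Fin m, ∑ ε : Fin m → Bool, spin (ε s) * spin (ε t)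
        = if s = t then (2 : ℝ) ^ m else 0 := by
      intro t
      by_cases hst : s = t
      · subst hst
        simp only [if_pos rfl]
        have : ∀ ε : Fin m → Bool, spin (ε s) * spin (ε s) = 1 := by
          intro ε; cases (ε s) <;> norm_num [spin]
        simp only [this, Finset.sum_const, Finset.card_univ]
        simp [Fintype.card_fun]
      · rw [if_neg hst]; exact sum_spin_pair hst
    simp only [this]
    simp
  simp only [this, Finset.sum_const, Finset.card_univ, Fintype.card_fin]
  simp [mul_comm]

lemma beq_beq (a b : Bool) : (a == (a == b)) = b := by cases a <;> cases b <;> rfl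

lemma sum_eval {k : ℕ} {X : Type*} [Fintype X] [DecidableEq X] (j : Fin k) (F : X → ℝ) :
    ∑ σ : Fin k → X, F (σ j) = (Fintype.card X : ℝ) ^ (k - 1) * ∑ x : X, F x := by
  rw [← Equiv.sum_comp (Equiv.piSplitAt j (fun _ : Fin k => X)).symm
    (fun σ : Fin k → X => F (σ j))]
  have happ : ∀ p : X × ({ j' // j' ≠ j } → X),
      ((Equiv.piSplitAt j (fun _ : Fin k => X)).symm p) j = p.1 := by
    intro p
    simp [Equiv.piSplitAt_symm_apply]
  simp only [happ]
  rw [Fintype.sum_prod_type_right]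
  simp only []
  rw [Finset.sum_const, Finset.card_univ]
  have hcard : Fintype.card ({ j' // j' ≠ j } → X) = Fintype.card X ^ (k - 1) := by
    rw [Fintype.card_fun]
    congr 1
    have : Fintype.card { j' // j' ≠ j } = Fintype.card (Fin k) - Fintype.card { j' : Fin k // j' = j } := by
      exact Fintype.card_subtype_compl _
    rw [this, Fintype.card_subtype_eq, Fintype.card_fin]
  rw [hcard]
  push_cast
  ring

lemma pair_marginal {k n : ℕ} {i j : Fin k} (hij : i ≠ j) (F : (Fin n → Bool) → ℝ) :
    ∑ σ : Fin k → Fin n → Bool, F (fun s => σ i s == σ j s)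
      = (2 : ℝ) ^ (n * (k - 1)) * ∑ ε : Fin n → Bool, F ε := by
  have hinv : Function.Involutive
      (fun σ : Fin k → Fin n → Bool => Function.update σ j (fun s => σ i s == σ j s)) := by
    intro σ
    have hi : ∀ τ : Fin k → Fin n → Bool, ∀ v, Function.update τ j v i = τ i :=
      fun τ v => Function.update_of_ne hij v τ
    funext x
    by_cases hx : x = j
    · subst hx
      simp only [Function.update_self, hi, beq_beq]
    · simp only [Function.update_of_ne hx]
  have key := Equiv.sum_comp (Function.Involutive.toPerm _ hinv)
      (fun σ : Fin k → Fin n → Bool => F (fun s => σ i s == σ j s))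
  have hpt : ∀ σ : Fin k → Fin n → Bool,
      (fun s => ((Function.Involutive.toPerm _ hinv) σ) i s
          == ((Function.Involutive.toPerm _ hinv) σ) j s) = σ j := by
    intro σ
    funext s
    show (Function.update σ j (fun s => σ i s == σ j s) i s
        == Function.update σ j (fun s => σ i s == σ j s) j s) = σ j s
    rw [Function.update_of_ne hij, Function.update_self]
    exact beq_beq _ _
  simp only [hpt] at key
  rw [← key, sum_eval j F]
  have : (Fintype.card (Fin n → Bool) : ℝ) = 2 ^ n := by
    rw [Fintype.card_fun, Fintype.card_fin, Fintype.card_bool]; push_cast; ring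
  rw [this, ← pow_mul]


lemma exp_linear_sub_sq_eq (a : ℝ) :
    (fun x : ℝ => Real.exp (a * x - x ^ 2 / 2))
      = fun x => Real.exp (a ^ 2 / 2) * Real.exp (-(1/2) * (x - a) ^ 2) := by
  funext x; rw [← Real.exp_add]; congr 1; ring

lemma integrable_exp_linear_sub_sq (a : ℝ) :
    Integrable (fun x : ℝ => Real.exp (a * x - x ^ 2 / 2)) := by
  rw [exp_linear_sub_sq_eq]
  exact ((integrable_exp_neg_mul_sq (show (0:ℝ) < 1/2 by norm_num)).comp_sub_right
    a).const_mul _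

lemma integral_exp_linear_sub_sq (a : ℝ) :
    ∫ x : ℝ, Real.exp (a * x - x ^ 2 / 2)
      = Real.exp (a ^ 2 / 2) * Real.sqrt (2 * Real.pi) := by
  rw [exp_linear_sub_sq_eq, MeasureTheory.integral_const_mul]
  rw [integral_sub_right_eq_self (fun y : ℝ => Real.exp (-(1/2) * y ^ 2)) a]
  rw [integral_gaussian]
  congr 1
  rw [div_div_eq_mul_div]
  norm_num [mul_comm]

lemma gauss_bound {n : ℕ} (hn : 0 < n) {lam : ℝ} (hlam : 0 ≤ lam) (h2 : 2 * lam < n) :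
    ((2:ℝ) ^ n)⁻¹ * ∑ ε : Fin n → Bool, Real.exp (lam * ((n:ℝ)⁻¹ * ∑ s, spin (ε s)) ^ 2)
      ≤ (1 - 2 * lam / n) ^ (-(1/2) : ℝ) := by
  have hnR : (0:ℝ) < n := by exact_mod_cast hn
  set c := Real.sqrt (2 * lam) with hc
  have hc2 : c ^ 2 = 2 * lam := Real.sq_sqrt (by linarith)
  have hsπ : (0:ℝ) < Real.sqrt (2 * Real.pi) := Real.sqrt_pos.2 (by positivity)
  set q : (Fin n → Bool) → ℝ := fun ε => (n:ℝ)⁻¹ * ∑ s, spin (ε s) with hq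
  have hrep : ∀ ε, Real.exp (lam * (q ε) ^ 2)
      = (Real.sqrt (2 * Real.pi))⁻¹ * ∫ x : ℝ, Real.exp (c * q ε * x - x ^ 2 / 2) := by
    intro ε
    rw [integral_exp_linear_sub_sq, mul_comm (Real.exp _), ← mul_assoc,
      inv_mul_cancel₀ (ne_of_gt hsπ), one_mul]
    congr 1
    have h1 : (c * q ε) ^ 2 = c ^ 2 * (q ε) ^ 2 := mul_pow _ _ _
    rw [h1, hc2]; ring
  have hsum : ∑ ε : Fin n → Bool, Real.exp (lam * (q ε) ^ 2)
      = (Real.sqrt (2 * Real.pi))⁻¹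
        * ∫ x : ℝ, ∑ ε : Fin n → Bool, Real.exp (c * q ε * x - x ^ 2 / 2) := by
    simp only [hrep]
    rw [← Finset.mul_sum, MeasureTheory.integral_finset_sum]
    intro ε _
    exact integrable_exp_linear_sub_sq _
  have hpt : ∀ x : ℝ, ∑ ε : Fin n → Bool, Real.exp (c * q ε * x - x ^ 2 / 2)
      ≤ (2:ℝ) ^ n * Real.exp (-(1/2 - lam / n) * x ^ 2) := by
    intro x
    have hform : ∀ ε : Fin n → Bool, Real.exp (c * q ε * x - x ^ 2 / 2)
        = Real.exp (-(x ^ 2) / 2) * ∏ s, Real.exp ((c * x / n) * spin (ε s)) := by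
      intro ε
      rw [← Real.exp_sum, ← Real.exp_add]
      congr 1
      rw [hq, ← Finset.mul_sum]
      field_simp
      ring
    simp only [hform]
    rw [← Finset.mul_sum, sum_prod_bool (fun _ b => Real.exp ((c * x / n) * spin b))]
    have hcosh : ∀ s : Fin n, (Real.exp ((c * x / n) * spin true)
        + Real.exp ((c * x / n) * spin false)) = 2 * Real.cosh (c * x / n) := by
      intro s
      rw [Real.cosh_eq]
      simp [spin, mul_comm]
      ring
    rw [Finset.prod_const, Finset.card_univ, Fintype.card_fin, hcosh ⟨0, hn⟩]
    have hch : Real.cosh (c * x / n) ^ n ≤ Real.exp ((c * x / n) ^ 2 / 2) ^ n :=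
      pow_le_pow_left₀ (Real.cosh_pos _).le (Real.cosh_le_exp_half_sq _) n
    calc Real.exp (-(x ^ 2) / 2) * (2 * Real.cosh (c * x / n)) ^ n
        = (2:ℝ) ^ n * (Real.exp (-(x ^ 2) / 2) * Real.cosh (c * x / n) ^ n) := by
          rw [mul_pow]; ring
      _ ≤ (2:ℝ) ^ n * (Real.exp (-(x ^ 2) / 2) * Real.exp ((c * x / n) ^ 2 / 2) ^ n) := by
          gcongr
      _ = (2:ℝ) ^ n * Real.exp (-(1/2 - lam / n) * x ^ 2) := by
          congr 1
          rw [← Real.exp_nat_mul, ← Real.exp_add]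
          congr 1
          have hd : (c * x / n) ^ 2 = c ^ 2 * x ^ 2 / (n:ℝ) ^ 2 := by ring
          rw [hd, hc2]
          field_simp
          ring
  have hb : (0:ℝ) < 1/2 - lam / n := by
    have : lam / n < 1/2 := by
      rw [div_lt_iff₀ hnR]; linarith
    linarith
  have ht : (0:ℝ) < 1 - 2 * lam / n := by
    have : 2 * lam / n < 1 := by
      rw [div_lt_iff₀ hnR]; linarith
    linarith
  have hInt1 : Integrable (fun x : ℝ => ∑ ε : Fin n → Bool,
      Real.exp (c * q ε * x - x ^ 2 / 2)) :=
    integrable_finset_sum _ (fun ε _ => integrable_exp_linear_sub_sq _)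
  have hInt2 : Integrable (fun x : ℝ => (2:ℝ) ^ n * Real.exp (-(1/2 - lam / n) * x ^ 2)) :=
    (integrable_exp_neg_mul_sq hb).const_mul _
  have hmono := integral_mono hInt1 hInt2 hpt
  have hIR : ∫ x : ℝ, (2:ℝ) ^ n * Real.exp (-(1/2 - lam / n) * x ^ 2)
      = 2 ^ n * Real.sqrt (Real.pi / (1/2 - lam / n)) := by
    rw [MeasureTheory.integral_const_mul, integral_gaussian]
  rw [hIR] at hmono
  have chain : ((2:ℝ) ^ n)⁻¹ * ∑ ε : Fin n → Bool, Real.exp (lam * (q ε) ^ 2)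
      ≤ (Real.sqrt (2 * Real.pi))⁻¹ * Real.sqrt (Real.pi / (1/2 - lam / n)) := by
    rw [hsum]
    have h2n : (0:ℝ) < (2:ℝ) ^ n := by positivity
    calc ((2:ℝ) ^ n)⁻¹ * ((Real.sqrt (2 * Real.pi))⁻¹ * ∫ x : ℝ, ∑ ε : Fin n → Bool,
          Real.exp (c * q ε * x - x ^ 2 / 2))
        ≤ ((2:ℝ) ^ n)⁻¹ * ((Real.sqrt (2 * Real.pi))⁻¹
            * (2 ^ n * Real.sqrt (Real.pi / (1/2 - lam / n)))) := by
          gcongr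
      _ = (Real.sqrt (2 * Real.pi))⁻¹ * Real.sqrt (Real.pi / (1/2 - lam / n)) := by
          field_simp
  refine chain.trans (le_of_eq ?_)
  have hbt : Real.pi / (1/2 - lam / n) = 2 * Real.pi / (1 - 2 * lam / n) := by
    rw [div_eq_div_iff hb.ne' ht.ne']
    ring
  rw [hbt, Real.sqrt_div' _ ht.le]
  rw [Real.rpow_neg ht.le, ← Real.sqrt_eq_rpow]
  rw [← mul_div_assoc, inv_mul_cancel₀ hsπ.ne', one_div]


lemma overlap_comm {n : ℕ} (σ τ : Fin n → Bool) : overlap σ τ = overlap τ σ := by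
  unfold overlap
  congr 1
  exact Finset.sum_congr rfl fun s _ => mul_comm _ _

lemma qmax_nonneg {k n : ℕ} (σ : Fin k → Fin n → Bool) : 0 ≤ qmax σ :=
  NNReal.coe_nonneg _

lemma qmax_sq_le {k n : ℕ} (σ : Fin k → Fin n → Bool) :
    (qmax σ) ^ 2 ≤ (1/2) * ∑ p ∈ (Finset.univ : Finset (Fin k)).offDiag,
      (overlap (σ p.1) (σ p.2)) ^ 2 := by
  rcases ((Finset.univ : Finset (Fin k)).offDiag).eq_empty_or_nonempty with h | h
  · have : qmax σ = 0 := by unfold qmax; rw [h]; simp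
    rw [this, h]
    simp
  · obtain ⟨p0, hp0, hsup⟩ := Finset.exists_mem_eq_sup _ h
      (fun p : Fin k × Fin k => Real.toNNReal |overlap (σ p.1) (σ p.2)|)
    have hq : qmax σ = |overlap (σ p0.1) (σ p0.2)| := by
      unfold qmax
      rw [hsup, Real.coe_toNNReal _ (abs_nonneg _)]
    have hne : p0.1 ≠ p0.2 := (Finset.mem_offDiag.1 hp0).2.2
    have hp1 : (p0.2, p0.1) ∈ (Finset.univ : Finset (Fin k)).offDiag := by
      rw [Finset.mem_offDiag]
      exact ⟨Finset.mem_univ _, Finset.mem_univ _, hne.symm⟩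
    have hpair : ({p0, (p0.2, p0.1)} : Finset (Fin k × Fin k))
        ⊆ (Finset.univ : Finset (Fin k)).offDiag := by
      intro p hp
      rcases Finset.mem_insert.1 hp with rfl | hp
      · exact hp0
      · rw [Finset.mem_singleton.1 hp]; exact hp1
    have hne2 : p0 ≠ (p0.2, p0.1) := by
      intro hcon
      exact hne (by rw [Prod.ext_iff] at hcon; exact hcon.1)
    have hsum : ∑ p ∈ ({p0, (p0.2, p0.1)} : Finset (Fin k × Fin k)),
        (overlap (σ p.1) (σ p.2)) ^ 2 = 2 * (qmax σ) ^ 2 := by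
      rw [Finset.sum_pair hne2, hq, sq_abs]
      simp only []
      rw [overlap_comm (σ p0.2) (σ p0.1)]
      ring
    have hle := Finset.sum_le_sum_of_subset_of_nonneg hpair
      (fun p _ _ => sq_nonneg (overlap (σ p.1) (σ p.2)))
    rw [hsum] at hle
    linarith

end Aux

/-- For any `β ≥ 0` with `k(k−1)β < n` and any function `g` on `k`-tuples of
configurations with `|g| ≤ β q_max²`, the uniform average of `exp(g)` satisfies
`1 − k(k−1)β/(2n) ≤ E_k[exp g] ≤ (1 − k(k−1)β/n)^{−1/2}`. -/
theorem exp_overlap_bound (k n : ℕ) (hk : 0 < k) (hn : 0 < n) (β : ℝ) (hβ : 0 ≤ β)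
    (hβn : (k : ℝ) * ((k : ℝ) - 1) * β < n)
    (g : (Fin k → Fin n → Bool) → ℝ)
    (hg : ∀ σ, |g σ| ≤ β * (qmax σ) ^ 2) :
    1 - (k : ℝ) * ((k : ℝ) - 1) * β / (2 * n)
        ≤ ((2 : ℝ) ^ (n * k))⁻¹ * ∑ σ : Fin k → Fin n → Bool, Real.exp (g σ) ∧
    ((2 : ℝ) ^ (n * k))⁻¹ * ∑ σ : Fin k → Fin n → Bool, Real.exp (g σ)
        ≤ (1 - (k : ℝ) * ((k : ℝ) - 1) * β / n) ^ (-(1 / 2) : ℝ) := by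
  have hnR : (0:ℝ) < n := by exact_mod_cast hn
  have h2nk : (0:ℝ) < (2:ℝ) ^ (n * k) := by positivity
  have hcardσ : (Fintype.card (Fin k → Fin n → Bool) : ℝ) = 2 ^ (n * k) := by
    rw [Fintype.card_fun, Fintype.card_fun, Fintype.card_fin, Fintype.card_fin,
      Fintype.card_bool]
    push_cast
    rw [← pow_mul]
  -- the case k = 1
  rcases eq_or_lt_of_le (Nat.one_le_iff_ne_zero.2 hk.ne') with hk1 | hk2
  · have hone : (k:ℝ) * ((k:ℝ) - 1) = 0 := by rw [← hk1]; push_cast; ring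
    have hod : (Finset.univ : Finset (Fin k)).offDiag = ∅ := by
      subst hk1
      ext p
      simp [Finset.mem_offDiag, Fin.ext_iff, Subsingleton.elim p.1 p.2]
    have hg0 : ∀ σ : Fin k → Fin n → Bool, g σ = 0 := by
      intro σ
      have hq0 : qmax σ = 0 := by unfold qmax; rw [hod]; simp
      have := hg σ
      rw [hq0] at this
      simp at this
      exact abs_eq_zero.1 (le_antisymm (by simpa using this) (abs_nonneg _))
    have hE : ((2 : ℝ) ^ (n * k))⁻¹ * ∑ σ : Fin k → Fin n → Bool, Real.exp (g σ) = 1 := by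
      simp only [hg0, Real.exp_zero, Finset.sum_const, Finset.card_univ, nsmul_eq_mul,
        mul_one]
      rw [hcardσ]
      exact inv_mul_cancel₀ h2nk.ne'
    rw [hE, hone]
    norm_num
  -- now k ≥ 2
  have hA : ((k * (k-1) : ℕ) : ℝ) = (k:ℝ) * ((k:ℝ) - 1) := by
    have : (1:ℕ) ≤ k := hk
    push_cast [Nat.cast_sub this]
    ring
  have hcardP : ((Finset.univ : Finset (Fin k)).offDiag).card = k * (k-1) := by
    rw [Finset.offDiag_card, Finset.card_univ, Fintype.card_fin]
    cases k with
    | zero => rfl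
    | succ m => rw [Nat.succ_sub_one, Nat.mul_succ, Nat.add_sub_cancel]
  have hApos : (0:ℝ) < ((k * (k-1) : ℕ) : ℝ) := by
    rw [hA]
    have h2R : (2:ℝ) ≤ (k:ℝ) := by exact_mod_cast hk2
    nlinarith
  set A : ℕ := k * (k-1) with hAdef
  -- overlap in terms of beq
  have hov : ∀ (i j : Fin k) (σ : Fin k → Fin n → Bool),
      overlap (σ i) (σ j) = (n:ℝ)⁻¹ * ∑ s, spin ((σ i s == σ j s)) := by
    intro i j σ
    unfold overlap
    congr 1
    exact Finset.sum_congr rfl fun s _ => spin_mul _ _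
  have hpow : (2:ℝ) ^ (n * (k-1)) * (2:ℝ) ^ n = (2:ℝ) ^ (n * k) := by
    rw [← pow_add]
    congr 1
    have : n * (k - 1) + n = n * (k - 1 + 1) := by ring
    rw [this, Nat.sub_add_cancel hk]
  -- second moment of each overlap
  have hQsum : ∑ ε : Fin n → Bool, ((n:ℝ)⁻¹ * ∑ s, spin (ε s)) ^ 2 = 2 ^ n / n := by
    simp only [mul_pow]
    rw [← Finset.mul_sum, sum_sq_spin]
    field_simp
  have hpairsq : ∀ p ∈ (Finset.univ : Finset (Fin k)).offDiag,
      ∑ σ : Fin k → Fin n → Bool, (overlap (σ p.1) (σ p.2)) ^ 2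
        = (2:ℝ) ^ (n * (k-1)) * (2 ^ n / n) := by
    intro p hp
    have hij : p.1 ≠ p.2 := (Finset.mem_offDiag.1 hp).2.2
    have := pair_marginal (n := n) hij
      (fun ε : Fin n → Bool => ((n:ℝ)⁻¹ * ∑ s, spin (ε s)) ^ 2)
    rw [hQsum] at this
    rw [← this]
    exact Finset.sum_congr rfl fun σ _ => by rw [hov p.1 p.2 σ]
  -- bound on the sum of qmax²
  have hqmaxsum : ∑ σ : Fin k → Fin n → Bool, (qmax σ) ^ 2
      ≤ (A:ℝ) * (2:ℝ) ^ (n * k) / (2 * n) := by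
    calc ∑ σ : Fin k → Fin n → Bool, (qmax σ) ^ 2
        ≤ ∑ σ : Fin k → Fin n → Bool, (1/2) * ∑ p ∈ (Finset.univ : Finset (Fin k)).offDiag,
            (overlap (σ p.1) (σ p.2)) ^ 2 :=
          Finset.sum_le_sum fun σ _ => qmax_sq_le σ
      _ = (1/2) * ∑ p ∈ (Finset.univ : Finset (Fin k)).offDiag,
            ∑ σ : Fin k → Fin n → Bool, (overlap (σ p.1) (σ p.2)) ^ 2 := by
          rw [← Finset.mul_sum, Finset.sum_comm]
      _ = (A:ℝ) * (2:ℝ) ^ (n * k) / (2 * n) := by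
          rw [Finset.sum_congr rfl hpairsq, Finset.sum_const, hcardP, nsmul_eq_mul]
          rw [← hpow]
          push_cast
          field_simp
  constructor
  · -- lower bound
    have hlow : ∀ σ : Fin k → Fin n → Bool, 1 - β * (qmax σ) ^ 2 ≤ Real.exp (g σ) := by
      intro σ
      have h1 := (abs_le.1 (hg σ)).1
      have h2 := Real.add_one_le_exp (g σ)
      linarith
    have hsum : (2:ℝ) ^ (n * k) - β * ((A:ℝ) * (2:ℝ) ^ (n * k) / (2 * n))
        ≤ ∑ σ : Fin k → Fin n → Bool, Real.exp (g σ) := by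
      calc (2:ℝ) ^ (n * k) - β * ((A:ℝ) * (2:ℝ) ^ (n * k) / (2 * n))
          ≤ (2:ℝ) ^ (n * k) - β * ∑ σ : Fin k → Fin n → Bool, (qmax σ) ^ 2 := by
            have := mul_le_mul_of_nonneg_left hqmaxsum hβ
            linarith
        _ = ∑ σ : Fin k → Fin n → Bool, (1 - β * (qmax σ) ^ 2) := by
            rw [Finset.sum_sub_distrib, Finset.sum_const, Finset.card_univ,
              nsmul_eq_mul, mul_one, hcardσ, ← Finset.mul_sum]
        _ ≤ ∑ σ : Fin k → Fin n → Bool, Real.exp (g σ) :=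
            Finset.sum_le_sum fun σ _ => hlow σ
    have := mul_le_mul_of_nonneg_left hsum (inv_nonneg.2 h2nk.le)
    calc 1 - (k : ℝ) * ((k : ℝ) - 1) * β / (2 * n)
        = ((2:ℝ) ^ (n * k))⁻¹ * ((2:ℝ) ^ (n * k)
            - β * ((A:ℝ) * (2:ℝ) ^ (n * k) / (2 * n))) := by
          rw [hA]
          field_simp
      _ ≤ _ := this
  · -- upper bound
    set lam : ℝ := (A:ℝ) * β / 2 with hlam
    have hlamnn : 0 ≤ lam := by
      rw [hlam]; positivity
    have h2lam : 2 * lam < n := by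
      have h' : 2 * lam = (A:ℝ) * β := by rw [hlam]; ring
      rw [h', hA]; exact hβn
    have hgauss := gauss_bound hn hlamnn h2lam
    have hBgoal : (1 - (k:ℝ) * ((k:ℝ) - 1) * β / n) ^ (-(1/2):ℝ)
        = (1 - 2 * lam / n) ^ (-(1/2):ℝ) := by
      have h' : 2 * lam / (n:ℝ) = (k:ℝ) * ((k:ℝ) - 1) * β / n := by
        rw [hlam, ← hA]; ring
      rw [h']
    set B : ℝ := (1 - 2 * lam / n) ^ (-(1/2) : ℝ) with hB
    have hjensen : ∀ σ : Fin k → Fin n → Bool, Real.exp (g σ)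
        ≤ ∑ p ∈ (Finset.univ : Finset (Fin k)).offDiag,
            ((A:ℝ))⁻¹ * Real.exp (lam * (overlap (σ p.1) (σ p.2)) ^ 2) := by
      intro σ
      have h1 : g σ ≤ β * qmax σ ^ 2 := (abs_le.1 (hg σ)).2
      have h2 : Real.exp (g σ) ≤ Real.exp (∑ p ∈ (Finset.univ : Finset (Fin k)).offDiag,
          (β/2) * (overlap (σ p.1) (σ p.2)) ^ 2) := by
        apply Real.exp_le_exp.2
        have hq := qmax_sq_le σ
        have h3 := mul_le_mul_of_nonneg_left hq hβ
        have h4 : β * ((1/2) * ∑ p ∈ (Finset.univ : Finset (Fin k)).offDiag,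
            (overlap (σ p.1) (σ p.2)) ^ 2)
            = ∑ p ∈ (Finset.univ : Finset (Fin k)).offDiag,
              (β/2) * (overlap (σ p.1) (σ p.2)) ^ 2 := by
          rw [← Finset.mul_sum, ← mul_assoc]
          congr 1
          ring
        linarith
      refine h2.trans ?_
      have hjen := (convexOn_exp).map_sum_le
        (t := (Finset.univ : Finset (Fin k)).offDiag)
        (w := fun _ : Fin k × Fin k => ((A:ℝ))⁻¹)
        (p := fun p : Fin k × Fin k => (A:ℝ) * ((β/2) * (overlap (σ p.1) (σ p.2)) ^ 2))
        (fun _ _ => by positivity)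
        (by rw [Finset.sum_const, hcardP, nsmul_eq_mul, mul_inv_cancel₀ hApos.ne'])
        (fun _ _ => Set.mem_univ _)
      have hexp1 : ∑ p ∈ (Finset.univ : Finset (Fin k)).offDiag,
          ((A:ℝ))⁻¹ • ((A:ℝ) * ((β/2) * (overlap (σ p.1) (σ p.2)) ^ 2))
          = ∑ p ∈ (Finset.univ : Finset (Fin k)).offDiag,
            (β/2) * (overlap (σ p.1) (σ p.2)) ^ 2 := by
        refine Finset.sum_congr rfl fun p _ => ?_
        rw [smul_eq_mul, ← mul_assoc, inv_mul_cancel₀ hApos.ne', one_mul]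
      have hexp2 : ∀ p : Fin k × Fin k,
          (A:ℝ) * ((β/2) * (overlap (σ p.1) (σ p.2)) ^ 2)
            = lam * (overlap (σ p.1) (σ p.2)) ^ 2 := by
        intro p; rw [hlam]; ring
      rw [hexp1] at hjen
      refine hjen.trans (le_of_eq ?_)
      refine Finset.sum_congr rfl fun p _ => ?_
      simp only [smul_eq_mul]
      rw [hexp2 p]
    have hεB : ∑ ε : Fin n → Bool,
        Real.exp (lam * ((n:ℝ)⁻¹ * ∑ s, spin (ε s)) ^ 2) ≤ 2 ^ n * B := by
      have h2n : (0:ℝ) < (2:ℝ) ^ n := by positivity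
      rw [hB]
      calc ∑ ε : Fin n → Bool, Real.exp (lam * ((n:ℝ)⁻¹ * ∑ s, spin (ε s)) ^ 2)
          = (2:ℝ) ^ n * (((2:ℝ) ^ n)⁻¹ * ∑ ε : Fin n → Bool,
              Real.exp (lam * ((n:ℝ)⁻¹ * ∑ s, spin (ε s)) ^ 2)) := by
            rw [← mul_assoc, mul_inv_cancel₀ h2n.ne', one_mul]
        _ ≤ (2:ℝ) ^ n * (1 - 2 * lam / n) ^ (-(1/2):ℝ) := by
            exact mul_le_mul_of_nonneg_left hgauss h2n.le
    have hmain : ∑ σ : Fin k → Fin n → Bool, Real.exp (g σ) ≤ (2:ℝ) ^ (n * k) * B := by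
      calc ∑ σ : Fin k → Fin n → Bool, Real.exp (g σ)
          ≤ ∑ σ : Fin k → Fin n → Bool, ∑ p ∈ (Finset.univ : Finset (Fin k)).offDiag,
              ((A:ℝ))⁻¹ * Real.exp (lam * (overlap (σ p.1) (σ p.2)) ^ 2) :=
            Finset.sum_le_sum fun σ _ => hjensen σ
        _ = ∑ p ∈ (Finset.univ : Finset (Fin k)).offDiag, ((A:ℝ))⁻¹
              * ∑ σ : Fin k → Fin n → Bool,
                Real.exp (lam * (overlap (σ p.1) (σ p.2)) ^ 2) := by
            rw [Finset.sum_comm]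
            exact Finset.sum_congr rfl fun p _ => by rw [← Finset.mul_sum]
        _ ≤ ∑ p ∈ (Finset.univ : Finset (Fin k)).offDiag, ((A:ℝ))⁻¹
              * ((2:ℝ) ^ (n * (k-1)) * (2 ^ n * B)) := by
            refine Finset.sum_le_sum fun p hp => ?_
            have hij : p.1 ≠ p.2 := (Finset.mem_offDiag.1 hp).2.2
            have hm := pair_marginal (n := n) hij
              (fun ε : Fin n → Bool => Real.exp (lam * ((n:ℝ)⁻¹ * ∑ s, spin (ε s)) ^ 2))
            have heq : ∑ σ : Fin k → Fin n → Bool,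
                Real.exp (lam * (overlap (σ p.1) (σ p.2)) ^ 2)
                = (2:ℝ) ^ (n * (k-1)) * ∑ ε : Fin n → Bool,
                    Real.exp (lam * ((n:ℝ)⁻¹ * ∑ s, spin (ε s)) ^ 2) := by
              rw [← hm]
              exact Finset.sum_congr rfl fun σ _ => by rw [hov p.1 p.2 σ]
            rw [heq]
            have h2p : (0:ℝ) ≤ (2:ℝ) ^ (n * (k-1)) := by positivity
            exact mul_le_mul_of_nonneg_left
              (mul_le_mul_of_nonneg_left hεB h2p) (by positivity)
        _ = (2:ℝ) ^ (n * k) * B := by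
            rw [Finset.sum_const, hcardP, nsmul_eq_mul]
            rw [← mul_assoc, mul_inv_cancel₀ hApos.ne', one_mul, ← mul_assoc, hpow]
    rw [hBgoal]
    calc ((2 : ℝ) ^ (n * k))⁻¹ * ∑ σ : Fin k → Fin n → Bool, Real.exp (g σ)
        ≤ ((2 : ℝ) ^ (n * k))⁻¹ * ((2:ℝ) ^ (n * k) * B) :=
          mul_le_mul_of_nonneg_left hmain (inv_nonneg.2 h2nk.le)
      _ = B := by rw [← mul_assoc, inv_mul_cancel₀ h2nk.ne', one_mul]
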